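/- Lemma 2, first part: for every integer r ≥ 1, 3·|T(r)| ≤ 2·|V(r)| (i.e. |T(r)| ≤ (2/3)|V(r)|). -/

import Mathlib

/-- Vertex set of the cellular interference graph: pairs `(a,b)` identified with
the Eisenstein integer `a + bω`, where `ω = (−1+i√3)/2`, satisfying
`|Re(a+bω)| ≤ r` and `|Im(a+bω)| ≤ (√3/2)r`, i.e. `|2a − b| ≤ 2r` and `|b| ≤ r`. -/
noncomputable def V (r : ℤ) : Finset (ℤ × ℤ) :=
  (Finset.Icc (-(2 * r)) (2 * r) ×ˢ Finset.Icc (-r) r).filter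
    (fun p => |2 * p.1 - p.2| ≤ 2 * r ∧ |p.2| ≤ r)

/-- `f(a,b) = (a+b) mod 3`. -/
def f (p : ℤ × ℤ) : ℤ := (p.1 + p.2) % 3

/-- Triangle index set: `(a,b)` with `f(a,b) ≠ 0` such that all three points
`(a,b)`, `(a,b+1)`, `(a+1,b+1)` lie in `V r`. -/
noncomputable def T (r : ℤ) : Finset (ℤ × ℤ) :=
  (V r).filter (fun p => f p ≠ 0 ∧ (p.1, p.2 + 1) ∈ V r ∧ (p.1 + 1, p.2 + 1) ∈ V r)

/-- The vertex set of the triangle indexed by `p = (a,b)`: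
`{(a,b), (a,b+1), (a+1,b+1)}`. -/
def triVerts (p : ℤ × ℤ) : Finset (ℤ × ℤ) := {p, (p.1, p.2 + 1), (p.1 + 1, p.2 + 1)}

lemma mem_triVerts_iff (v p : ℤ × ℤ) :
    v ∈ triVerts p ↔ p = v ∨ p = (v.1, v.2 - 1) ∨ p = (v.1 - 1, v.2 - 1) := by
  simp only [triVerts, Finset.mem_insert, Finset.mem_singleton, Prod.ext_iff]
  omega

lemma card_triVerts (p : ℤ × ℤ) : (triVerts p).card = 3 := by
  rw [triVerts, Finset.card_insert_of_notMem, Finset.card_insert_of_notMem,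
    Finset.card_singleton]
  · simp only [Finset.mem_singleton, Prod.ext_iff]; omega
  · simp only [Finset.mem_insert, Finset.mem_singleton, Prod.ext_iff]; omega

/-- The number `n_v` of triangles of `T r` whose vertex set contains `v`. -/
noncomputable def nTri (r : ℤ) (v : ℤ × ℤ) : ℕ := ((T r).filter (fun p => v ∈ triVerts p)).card

lemma nTri_le_two (r : ℤ) (v : ℤ × ℤ) : nTri r v ≤ 2 := by
  classical
  set A : Finset (ℤ × ℤ) := {v, (v.1, v.2 - 1), (v.1 - 1, v.2 - 1)} with hA
  obtain ⟨x, hxA, hx0⟩ : ∃ x ∈ A, f x = 0 := by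
    by_cases h0 : (v.1 + v.2) % 3 = 0
    · exact ⟨v, by simp [hA], h0⟩
    by_cases h1 : (v.1 + (v.2 - 1)) % 3 = 0
    · exact ⟨(v.1, v.2 - 1), by simp [hA], h1⟩
    · exact ⟨(v.1 - 1, v.2 - 1), by simp [hA], by simp only [f]; omega⟩
  have hsub : (T r).filter (fun p => v ∈ triVerts p) ⊆ A.erase x := by
    intro p hp
    rw [Finset.mem_filter] at hp
    have hpT := hp.1
    rw [T, Finset.mem_filter] at hpT
    refine Finset.mem_erase.mpr ⟨?_, ?_⟩
    · rintro rfl; exact hpT.2.1 hx0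
    · rw [hA]
      simp only [Finset.mem_insert, Finset.mem_singleton]
      exact (mem_triVerts_iff v p).mp hp.2
  have hcards : (A.erase x).card ≤ 2 := by
    have h3 : A.card ≤ 3 := by
      rw [hA]
      apply le_trans (Finset.card_insert_le _ _)
      have := Finset.card_insert_le (v.1, v.2 - 1) ({(v.1 - 1, v.2 - 1)} : Finset (ℤ × ℤ))
      simp at this ⊢
      omega
    rw [Finset.card_erase_of_mem hxA]
    omega
  exact le_trans (Finset.card_le_card hsub) hcards

/-- **Lemma 2, first part:** `3·|T(r)| ≤ 2·|V(r)|`, i.e. `|T(r)| ≤ (2/3)|V(r)|`. -/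
theorem card_T_le (r : ℤ) (hr : 1 ≤ r) :
    3 * (T r).card ≤ 2 * (V r).card := by
  classical
  have step : ∀ p ∈ T r, ((V r).filter (fun v => v ∈ triVerts p)).card = 3 := by
    intro p hp
    have h1 : p ∈ V r ∧ f p ≠ 0 ∧ (p.1, p.2 + 1) ∈ V r ∧ (p.1 + 1, p.2 + 1) ∈ V r := by
      simpa [T, Finset.mem_filter] using hp
    have hsub : triVerts p ⊆ V r := by
      intro x hx
      simp only [triVerts, Finset.mem_insert, Finset.mem_singleton] at hx
      rcases hx with rfl | rfl | rfl
      · exact h1.1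
      · exact h1.2.2.1
      · exact h1.2.2.2
    rw [Finset.filter_mem_eq_inter, Finset.inter_eq_right.mpr hsub, card_triVerts]
  calc 3 * (T r).card = ∑ _p ∈ T r, 3 := by rw [Finset.sum_const]; ring
    _ = ∑ p ∈ T r, ((V r).filter (fun v => v ∈ triVerts p)).card :=
        (Finset.sum_congr rfl step).symm
    _ = ∑ p ∈ T r, ∑ v ∈ V r, if v ∈ triVerts p then 1 else 0 := by
        refine Finset.sum_congr rfl fun p _ => ?_; rw [Finset.card_filter]
    _ = ∑ v ∈ V r, ∑ p ∈ T r, if v ∈ triVerts p then 1 else 0 := Finset.sum_comm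
    _ = ∑ v ∈ V r, nTri r v := by
        refine Finset.sum_congr rfl fun v _ => ?_; rw [nTri, Finset.card_filter]
    _ ≤ ∑ _v ∈ V r, 2 := Finset.sum_le_sum (fun v _ => nTri_le_two r v)
    _ = 2 * (V r).card := by rw [Finset.sum_const]; ring
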